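/- Let T, U, t, u, φ : ℝ → ℝ be differentiable with U′(x) = φ(x)·T′(x) and u′(x) = φ(x)·t′(x) for all x, and let a ≠ 0 be a real number. Then for every x, the three vectors in ℝ³: D(x) = (a, t(x) − T(x), u(x) − U(x)) (the direction of the boundary light ray), D′(x) = (0, t′(x) − T′(x), u′(x) − U′(x)), and (0, T′(x), U′(x)) (the tangent of the directrix) are linearly dependent; equivalently, the 3×3 determinant with these rows vanishes. -/

import Mathlib

theorem euler_shadow_rays_coplanar
    (T U t u φ : ℝ → ℝ)
    (hT : Differentiable ℝ T) (hU : Differentiable ℝ U)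
    (ht : Differentiable ℝ t) (hu : Differentiable ℝ u)
    (hU' : ∀ x, deriv U x = φ x * deriv T x)
    (hu' : ∀ x, deriv u x = φ x * deriv t x)
    (a : ℝ) (ha : a ≠ 0) :
    ∀ x : ℝ,
      ¬ LinearIndependent ℝ
          ![(![a, t x - T x, u x - U x] : Fin 3 → ℝ),
            ![0, deriv t x - deriv T x, deriv u x - deriv U x],
            ![0, deriv T x, deriv U x]] ∧
      (Matrix.of
          ![(![a, t x - T x, u x - U x] : Fin 3 → ℝ),
            ![0, deriv t x - deriv T x, deriv u x - deriv U x],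
            ![0, deriv T x, deriv U x]]).det = 0 := by
  intro x
  have hdet : (Matrix.of
          ![(![a, t x - T x, u x - U x] : Fin 3 → ℝ),
            ![0, deriv t x - deriv T x, deriv u x - deriv U x],
            ![0, deriv T x, deriv U x]]).det = 0 := by
    simp [Matrix.det_fin_three, Matrix.vecHead, Matrix.vecTail, hU' x, hu' x]
    ring
  refine ⟨?_, hdet⟩
  intro hli
  have h2 := ((Matrix.isUnit_iff_isUnit_det _).mp
    ((Matrix.linearIndependent_rows_iff_isUnit).mp hli))
  change IsUnit (Matrix.of ![(![a, t x - T x, u x - U x] : Fin 3 → ℝ),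
      ![0, deriv t x - deriv T x, deriv u x - deriv U x],
      ![0, deriv T x, deriv U x]]).det at h2
  rw [hdet] at h2
  exact (by simp : ¬ IsUnit (0:ℝ)) h2
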